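/- Let α < 1 be real, let V(n,k) be an arbitrary array of real weights, let n ≥ 1, 1 ≤ l ≤ n and 0 ≤ x ≤ ⌊n/l⌋. Then the law of the number of blocks of size l under the Gibbs sampling formula satisfies: ∑_{c : c_l = x} G(c) = (n!·[(1−α)_{l−1}]^x/(x!·(l!)^x))·∑_{r=0}^{⌊n/l⌋−x} ((−1)^r·[(1−α)_{l−1}]^r/(r!·(l!)^r·(n−rl−lx)!))·∑_{k=r+x}^{r+x+n−rl−lx} V(n,k)·S(n−rl−lx, k−r−x; α), where the left sum ranges over all tuples (c_1,…,c_n) of nonnegative integers with ∑_{i=1}^{n} i·c_i = n and c_l = x. -/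

import Mathlib

/-- Rising factorial `(x)_n = x(x+1)⋯(x+n−1)`. -/
noncomputable def risingFac (x : ℝ) (n : ℕ) : ℝ := ∏ i ∈ Finset.range n, (x + i)

/-- Rising factorial with increment `α`: `(x)_{n↑α} = ∏_{i<n} (x + iα)`. -/
noncomputable def risingFacInc (x α : ℝ) (n : ℕ) : ℝ := ∏ i ∈ Finset.range n, (x + i * α)

/-- Falling factorial `(x)_{[n]} = x(x−1)⋯(x−n+1)`. -/
noncomputable def fallingFac (x : ℝ) (n : ℕ) : ℝ := ∏ i ∈ Finset.range n, (x - i)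

/-- Compositions of `n` into `k` positive parts, as functions `Fin k → ℕ`. -/
def compositions (n k : ℕ) : Finset (Fin k → ℕ) :=
  (Fintype.piFinset fun _ => Finset.range (n + 1)).filter
    (fun f => (∀ i, 0 < f i) ∧ ∑ i, f i = n)

/-- Tuples of `k` nonnegative integers summing to `n`. -/
def weakCompositions (n k : ℕ) : Finset (Fin k → ℕ) :=
  (Fintype.piFinset fun _ => Finset.range (n + 1)).filter (fun f => ∑ i, f i = n)

/-- Generalized (central) Stirling number
`S(n,k;α) = (n!/k!) ∑_{(n_1,…,n_k)} ∏_j (1−α)_{n_j−1}/n_j!`,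
the sum over compositions of `n` into `k` positive parts. -/
noncomputable def genStirling (α : ℝ) (n k : ℕ) : ℝ :=
  (Nat.factorial n : ℝ) / (Nat.factorial k : ℝ) *
    ∑ f ∈ compositions n k, ∏ j, risingFac (1 - α) (f j - 1) / (Nat.factorial (f j) : ℝ)

/-- Non-central generalized Stirling number
`S(n,k;α,γ) = ∑_{s=k}^n C(n,s) S(s,k;α) (−γ)_{n−s}`. -/
noncomputable def genStirlingNC (α γ : ℝ) (n k : ℕ) : ℝ :=
  ∑ s ∈ Finset.Icc k n, (n.choose s : ℝ) * genStirling α s k * risingFac (-γ) (n - s)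

/-- Count vectors `(c_1,…,c_n)` with `∑ i·c_i = n`, encoded as `c : Fin n → ℕ`
where index `i` represents size `i+1`. -/
def countVectors (n : ℕ) : Finset (Fin n → ℕ) :=
  (Fintype.piFinset fun _ => Finset.range (n + 1)).filter
    (fun c => ∑ i, (i.1 + 1) * c i = n)

/-- The Gibbs sampling formula
`G(c) = n!·V(n,k)·∏_i [(1−α)_{i−1}]^{c_i}/((i!)^{c_i} c_i!)`, `k = ∑ c_i`. -/
noncomputable def gibbsSampling (α : ℝ) (V : ℕ → ℕ → ℝ) (n : ℕ) (c : Fin n → ℕ) : ℝ :=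
  (Nat.factorial n : ℝ) * V n (∑ i, c i) *
    ∏ i, (risingFac (1 - α) i.1) ^ (c i) /
      ((Nat.factorial (i.1 + 1) : ℝ) ^ (c i) * (Nat.factorial (c i) : ℝ))

/- ### auxiliary definitions -/

noncomputable def Hh (α : ℝ) (i : ℕ) : ℝ := risingFac (1 - α) i / (Nat.factorial (i + 1) : ℝ)

def cv (n m : ℕ) : Finset (Fin n → ℕ) :=
  (Fintype.piFinset fun _ => Finset.range (n + 1)).filter (fun c => ∑ i, (i.1 + 1) * c i = m)

noncomputable def Ff (α : ℝ) {n : ℕ} (c : Fin n → ℕ) : ℝ :=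
  ∏ i, Hh α i.1 ^ c i / (Nat.factorial (c i) : ℝ)

noncomputable def Pf (α : ℝ) (n m k : ℕ) : ℝ :=
  ∑ c ∈ (cv n m).filter (fun c => ∑ i, c i = k), Ff α c

noncomputable def Gf (α : ℝ) (u : ℕ → ℝ) (n m : ℕ) : ℝ :=
  ∑ c ∈ cv n m, u (∑ i, c i) * Ff α c

noncomputable def Ga (α : ℝ) (u : ℕ → ℝ) (n m : ℕ) (i0 : Fin n) : ℝ :=
  ∑ c ∈ (cv n m).filter (fun c => c i0 = 0), u (∑ i, c i) * Ff α c

/- ### basic lemmas -/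

lemma weighted_le {n m : ℕ} {c : Fin n → ℕ} (hc : ∑ i, (i.1 + 1) * c i = m) (i : Fin n) :
    (i.1 + 1) * c i ≤ m := by
  subst hc
  exact Finset.single_le_sum (f := fun j : Fin n => (j.1 + 1) * c j)
    (fun j _ => Nat.zero_le _) (Finset.mem_univ i)

lemma mem_cv {n m : ℕ} (hm : m ≤ n) {c : Fin n → ℕ} :
    c ∈ cv n m ↔ ∑ i, (i.1 + 1) * c i = m := by
  constructor
  · intro h; exact (Finset.mem_filter.mp h).2
  · intro h
    refine Finset.mem_filter.mpr ⟨Fintype.mem_piFinset.mpr fun i => ?_, h⟩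
    have h1 := weighted_le h i
    have h2 : c i ≤ (i.1 + 1) * c i := Nat.le_mul_of_pos_left _ (Nat.succ_pos _)
    simp only [Finset.mem_range]
    omega

lemma sum_le_of_mem_cv {n m : ℕ} {c : Fin n → ℕ} (hc : ∑ i, (i.1 + 1) * c i = m) :
    ∑ i, c i ≤ m := by
  calc ∑ i, c i ≤ ∑ i, (i.1 + 1) * c i :=
        Finset.sum_le_sum fun i _ => Nat.le_mul_of_pos_left _ (Nat.succ_pos _)
    _ = m := hc

section splits
variable {n : ℕ} (i0 : Fin n)

lemma wsum_split (c : Fin n → ℕ) :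
    ∑ i, (i.1 + 1) * c i = (i0.1 + 1) * c i0 + ∑ i ∈ Finset.univ.erase i0, (i.1 + 1) * c i :=
  (Finset.add_sum_erase _ (fun i : Fin n => (i.1 + 1) * c i) (Finset.mem_univ i0)).symm

lemma csum_split (c : Fin n → ℕ) :
    ∑ i, c i = c i0 + ∑ i ∈ Finset.univ.erase i0, c i :=
  (Finset.add_sum_erase _ c (Finset.mem_univ i0)).symm

lemma Ff_split (α : ℝ) (c : Fin n → ℕ) :
    Ff α c = (Hh α i0.1 ^ c i0 / (Nat.factorial (c i0) : ℝ)) *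
      ∏ i ∈ Finset.univ.erase i0, Hh α i.1 ^ c i / (Nat.factorial (c i) : ℝ) :=
  (Finset.mul_prod_erase _ (fun i : Fin n => Hh α i.1 ^ c i / (Nat.factorial (c i) : ℝ))
    (Finset.mem_univ i0)).symm

lemma erase_sum_update {M : Type*} [AddCommMonoid M] (f : Fin n → ℕ → M) (c : Fin n → ℕ) (v : ℕ) :
    ∑ i ∈ Finset.univ.erase i0, f i (Function.update c i0 v i) =
      ∑ i ∈ Finset.univ.erase i0, f i (c i) :=
  Finset.sum_congr rfl fun i hi => by rw [Function.update_of_ne (Finset.ne_of_mem_erase hi)]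

lemma erase_prod_update (f : Fin n → ℕ → ℝ) (c : Fin n → ℕ) (v : ℕ) :
    ∏ i ∈ Finset.univ.erase i0, f i (Function.update c i0 v i) =
      ∏ i ∈ Finset.univ.erase i0, f i (c i) :=
  Finset.prod_congr rfl fun i hi => by rw [Function.update_of_ne (Finset.ne_of_mem_erase hi)]

end splits

lemma mem_cvf {n m : ℕ} (hm : m ≤ n) (P : (Fin n → ℕ) → Prop) [DecidablePred P] {c : Fin n → ℕ} :
    c ∈ (cv n m).filter P ↔ (∑ i, (i.1 + 1) * c i = m) ∧ P c := by
  rw [Finset.mem_filter, mem_cv hm]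

/-- Peeling the coordinate `i0` with value `x`. -/
lemma peelx (α : ℝ) (u : ℕ → ℝ) {n m : ℕ} (hm : m ≤ n) (i0 : Fin n) (x : ℕ)
    (hx : (i0.1 + 1) * x ≤ m) :
    ∑ c ∈ (cv n m).filter (fun c => c i0 = x), u (∑ i, c i) * Ff α c =
      Hh α i0.1 ^ x / (Nat.factorial x : ℝ) *
        Ga α (fun j => u (j + x)) n (m - (i0.1 + 1) * x) i0 := by
  classical
  rw [Ga, Finset.mul_sum]
  refine Finset.sum_nbij' (i := fun c => Function.update c i0 0)
    (j := fun c => Function.update c i0 x) ?_ ?_ ?_ ?_ ?_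
  · intro c hc
    obtain ⟨h1, h2⟩ := (mem_cvf hm _).mp hc
    refine (mem_cvf (by omega) _).mpr ⟨?_, Function.update_self _ _ _⟩
    beta_reduce
    rw [wsum_split i0, Function.update_self, erase_sum_update i0 (fun i v => (i.1 + 1) * v)]
    have h3 := wsum_split i0 c
    rw [h2] at h3
    omega
  · intro c hc
    obtain ⟨h1, h2⟩ := (mem_cvf (show m - (i0.1 + 1) * x ≤ n by omega) _).mp hc
    refine (mem_cvf hm _).mpr ⟨?_, Function.update_self _ _ _⟩
    beta_reduce
    rw [wsum_split i0, Function.update_self, erase_sum_update i0 (fun i v => (i.1 + 1) * v)]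
    have h3 := wsum_split i0 c
    rw [h2] at h3
    omega
  · intro c hc
    obtain ⟨h1, h2⟩ := (mem_cvf hm _).mp hc
    rw [← h2, Function.update_idem, Function.update_eq_self]
  · intro c hc
    obtain ⟨h1, h2⟩ := (mem_cvf (show m - (i0.1 + 1) * x ≤ n by omega) _).mp hc
    rw [← h2, Function.update_idem, Function.update_eq_self]
  · intro c hc
    obtain ⟨h1, h2⟩ := (mem_cvf hm _).mp hc
    have hsum : (∑ i, Function.update c i0 0 i) + x = ∑ i, c i := by
      rw [csum_split i0, Function.update_self, erase_sum_update i0 (fun _ v => v)]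
      have := csum_split i0 c
      omega
    rw [hsum]
    rw [Ff_split i0 α c, Ff_split i0 α (Function.update c i0 0), Function.update_self,
      erase_prod_update i0 (fun i v => Hh α i.1 ^ v / (Nat.factorial v : ℝ)), h2]
    simp [Nat.factorial]
    ring

lemma Gf_eq_sum_Ga (α : ℝ) (u : ℕ → ℝ) {n m : ℕ} (hm : m ≤ n) (i0 : Fin n) :
    Gf α u n m = ∑ x' ∈ Finset.range (m / (i0.1 + 1) + 1),
      Hh α i0.1 ^ x' / (Nat.factorial x' : ℝ) *
        Ga α (fun j => u (j + x')) n (m - (i0.1 + 1) * x') i0 := by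
  classical
  rw [Gf, ← Finset.sum_fiberwise_of_maps_to (g := fun c => c i0)
    (t := Finset.range (m / (i0.1 + 1) + 1)) (fun c hc => by
      have h1 := (mem_cv hm).mp hc
      have h2 := weighted_le h1 i0
      simp only [Finset.mem_range]
      have := Nat.div_le_div_right (c := i0.1 + 1) h2
      rw [Nat.mul_div_cancel_left _ (Nat.succ_pos _)] at this
      omega)]
  refine Finset.sum_congr rfl fun x' hx' => ?_
  have hx'le : (i0.1 + 1) * x' ≤ m := by
    rw [Finset.mem_range] at hx'
    calc (i0.1 + 1) * x' ≤ (i0.1 + 1) * (m / (i0.1 + 1)) := by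
          exact Nat.mul_le_mul_left _ (by omega)
      _ ≤ m := Nat.mul_div_le m _
  exact peelx α u hm i0 x' hx'le

lemma alt_sum (t : ℕ) (ht : 1 ≤ t) :
    ∑ x' ∈ Finset.Icc 1 t, (-1 : ℝ) ^ (t - x') / (Nat.factorial x' * Nat.factorial (t - x') : ℝ)
      = -(-1 : ℝ) ^ t / (Nat.factorial t : ℝ) := by
  have key : ∑ x' ∈ Finset.range (t + 1),
      (-1 : ℝ) ^ (t - x') / (Nat.factorial x' * Nat.factorial (t - x') : ℝ) = 0 := by
    have h0 : ∑ i ∈ Finset.range (t + 1), (-1 : ℤ) ^ i * (t.choose i : ℤ) = 0 := by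
      rw [Int.alternating_sum_range_choose, if_neg (by omega : ¬ t = 0)]
    have h0' : ∑ i ∈ Finset.range (t + 1), (-1 : ℝ) ^ i * (t.choose i : ℝ) = 0 := by
      exact_mod_cast congrArg (fun z : ℤ => (z : ℝ)) h0
    have heq : ∑ x' ∈ Finset.range (t + 1),
        (-1 : ℝ) ^ (t - x') / (Nat.factorial x' * Nat.factorial (t - x') : ℝ)
        = (-1 : ℝ) ^ t / (Nat.factorial t : ℝ) *
          ∑ i ∈ Finset.range (t + 1), (-1 : ℝ) ^ i * (t.choose i : ℝ) := by
      rw [Finset.mul_sum]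
      refine Finset.sum_congr rfl fun x' hx' => ?_
      rw [Finset.mem_range] at hx'
      have hle : x' ≤ t := by omega
      have hf1 : (Nat.factorial x' : ℝ) ≠ 0 := Nat.cast_ne_zero.mpr (Nat.factorial_ne_zero _)
      have hf2 : (Nat.factorial (t - x') : ℝ) ≠ 0 := Nat.cast_ne_zero.mpr (Nat.factorial_ne_zero _)
      have hf3 : (Nat.factorial t : ℝ) ≠ 0 := Nat.cast_ne_zero.mpr (Nat.factorial_ne_zero _)
      have hch : (t.choose x' : ℝ) = (Nat.factorial t : ℝ) /
          (Nat.factorial x' * Nat.factorial (t - x') : ℝ) := Nat.cast_choose ℝ hle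
      have h2 : (-1 : ℝ) ^ (t - x') = (-1 : ℝ) ^ t * (-1 : ℝ) ^ x' := by
        rw [← pow_add, show t + x' = (t - x') + 2 * x' by omega, pow_add, pow_mul]
        norm_num
      rw [h2, hch]
      field_simp
    rw [heq, h0', mul_zero]
  rw [Finset.sum_range_succ'] at key
  have hIcc : ∑ x' ∈ Finset.Icc 1 t,
      (-1 : ℝ) ^ (t - x') / (Nat.factorial x' * Nat.factorial (t - x') : ℝ)
      = ∑ i ∈ Finset.range t,
        (-1 : ℝ) ^ (t - (i + 1)) / (Nat.factorial (i + 1) * Nat.factorial (t - (i + 1)) : ℝ) := by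
    refine Finset.sum_nbij' (i := fun x' => x' - 1) (j := fun i => i + 1)
      (fun a ha => by simp only [Finset.mem_Icc] at ha; simp only [Finset.mem_range]; omega)
      (fun a ha => by simp only [Finset.mem_range] at ha; simp only [Finset.mem_Icc]; omega)
      (fun a ha => by simp only [Finset.mem_Icc] at ha; beta_reduce; omega)
      (fun a ha => by beta_reduce; omega)
      (fun a ha => by simp only [Finset.mem_Icc] at ha
                      rw [show a - 1 + 1 = a by omega])
  rw [hIcc]
  simp only [Nat.sub_zero, Nat.factorial_zero, Nat.cast_one, one_mul] at key
  have hf3 : (Nat.factorial t : ℝ) ≠ 0 := Nat.cast_ne_zero.mpr (Nat.factorial_ne_zero _)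
  field_simp at key ⊢
  linarith

lemma range_succ_to_Icc (M : ℕ) (f : ℕ → ℝ) :
    ∑ i ∈ Finset.range (M + 1), f i = f 0 + ∑ x' ∈ Finset.Icc 1 M, f x' := by
  rw [Finset.sum_range_succ', add_comm]
  congr 1
  refine Finset.sum_nbij' (i := fun i => i + 1) (j := fun x' => x' - 1)
    (fun a ha => by simp only [Finset.mem_range] at ha; simp only [Finset.mem_Icc]; omega)
    (fun a ha => by simp only [Finset.mem_Icc] at ha; simp only [Finset.mem_range]; omega)
    (fun a ha => by beta_reduce; omega)
    (fun a ha => by simp only [Finset.mem_Icc] at ha; beta_reduce; omega)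
    (fun a ha => rfl)

lemma Ga_eq (α : ℝ) {n : ℕ} (i0 : Fin n) :
    ∀ m, m ≤ n → ∀ u : ℕ → ℝ,
    Ga α u n m i0 = ∑ r ∈ Finset.range (m / (i0.1 + 1) + 1),
      (-1 : ℝ) ^ r * Hh α i0.1 ^ r / (Nat.factorial r : ℝ) *
        Gf α (fun j => u (j + r)) n (m - (i0.1 + 1) * r) := by
  intro m
  induction m using Nat.strong_induction_on with
  | _ m IH =>
  intro hm u
  set l := i0.1 + 1 with hldef
  have hl : 1 ≤ l := Nat.succ_pos _
  set M := m / l with hMdef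
  have hlM : l * M ≤ m := by rw [hMdef, mul_comm]; exact Nat.div_mul_le_self m l
  set X : ℕ → ℝ := fun t => Gf α (fun j => u (j + t)) n (m - l * t) with hX
  have hX0 : X 0 = Gf α u n m := by
    rw [hX]
    simp only [Nat.mul_zero, Nat.sub_zero, Nat.add_zero]
  -- peel identity
  have hpeel : Gf α u n m = Ga α u n m i0 +
      ∑ x' ∈ Finset.Icc 1 M, Hh α i0.1 ^ x' / (Nat.factorial x' : ℝ) *
        Ga α (fun j => u (j + x')) n (m - l * x') i0 := by
    rw [Gf_eq_sum_Ga α u hm i0, range_succ_to_Icc]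
    congr 1
    simp only [pow_zero, Nat.factorial_zero, Nat.cast_one, Nat.mul_zero, Nat.sub_zero,
      Nat.add_zero, one_div, inv_one, one_mul]
  -- rewrite each Ga in the sum via IH
  have hsum : ∑ x' ∈ Finset.Icc 1 M, Hh α i0.1 ^ x' / (Nat.factorial x' : ℝ) *
      Ga α (fun j => u (j + x')) n (m - l * x') i0
      = ∑ x' ∈ Finset.Icc 1 M, Hh α i0.1 ^ x' / (Nat.factorial x' : ℝ) *
        ∑ r ∈ Finset.range (M - x' + 1),
          (-1 : ℝ) ^ r * Hh α i0.1 ^ r / (Nat.factorial r : ℝ) * X (x' + r) := by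
    refine Finset.sum_congr rfl fun x' hx' => ?_
    rw [Finset.mem_Icc] at hx'
    have hlx' : l * x' ≤ m := le_trans (Nat.mul_le_mul_left l hx'.2) hlM
    have hlt : m - l * x' < m := by
      have : 1 ≤ l * x' := by nlinarith [hx'.1, hl]
      omega
    rw [IH _ hlt (by omega) (fun j => u (j + x'))]
    have hdiv : (m - l * x') / l = M - x' := by
      rw [Nat.sub_mul_div _ _ _, hMdef]
    congr 1
    refine Finset.sum_congr (by rw [hdiv]) fun r hr => ?_
    congr 1
    have h1 : m - l * x' - l * r = m - l * (x' + r) := by rw [Nat.mul_add]; omega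
    show Gf α (fun j => u (j + r + x')) n (m - l * x' - l * r) = X (x' + r)
    rw [hX, h1]
    beta_reduce
    congr 1
    funext j
    rw [show j + r + x' = j + (x' + r) by omega]
  -- reindex the double sum
  have hre : ∑ x' ∈ Finset.Icc 1 M, Hh α i0.1 ^ x' / (Nat.factorial x' : ℝ) *
      ∑ r ∈ Finset.range (M - x' + 1),
        (-1 : ℝ) ^ r * Hh α i0.1 ^ r / (Nat.factorial r : ℝ) * X (x' + r)
      = ∑ t ∈ Finset.Icc 1 M,
        (∑ x' ∈ Finset.Icc 1 t,
          (-1 : ℝ) ^ (t - x') / (Nat.factorial x' * Nat.factorial (t - x') : ℝ)) *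
          (Hh α i0.1 ^ t * X t) := by
    simp only [Finset.mul_sum, Finset.sum_mul]
    rw [Finset.sum_sigma', Finset.sum_sigma']
    refine Finset.sum_nbij' (i := fun p => ⟨p.1 + p.2, p.1⟩) (j := fun q => ⟨q.2, q.1 - q.2⟩)
      ?_ ?_ ?_ ?_ ?_
    · rintro ⟨a, b⟩ h
      simp only [Finset.mem_sigma, Finset.mem_Icc, Finset.mem_range] at h ⊢
      omega
    · rintro ⟨a, b⟩ h
      simp only [Finset.mem_sigma, Finset.mem_Icc, Finset.mem_range] at h ⊢
      omega
    · rintro ⟨a, b⟩ h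
      simp only [Finset.mem_sigma, Finset.mem_Icc, Finset.mem_range] at h
      exact Sigma.ext rfl (heq_of_eq (by omega : a + b - a = b))
    · rintro ⟨a, b⟩ h
      simp only [Finset.mem_sigma, Finset.mem_Icc, Finset.mem_range] at h
      exact Sigma.ext (show b + (a - b) = a by omega) HEq.rfl
    · rintro ⟨a, b⟩ h
      simp only [Finset.mem_sigma, Finset.mem_Icc, Finset.mem_range] at h
      beta_reduce
      rw [show a + b - a = b by omega, pow_add]
      ring
  have hre2 : ∑ t ∈ Finset.Icc 1 M,
      (∑ x' ∈ Finset.Icc 1 t,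
        (-1 : ℝ) ^ (t - x') / (Nat.factorial x' * Nat.factorial (t - x') : ℝ)) *
        (Hh α i0.1 ^ t * X t)
      = ∑ t ∈ Finset.Icc 1 M,
        (-(-1 : ℝ) ^ t / (Nat.factorial t : ℝ)) * (Hh α i0.1 ^ t * X t) :=
    Finset.sum_congr rfl fun t ht => by rw [alt_sum t (Finset.mem_Icc.mp ht).1]
  have hmain : Ga α u n m i0 = Gf α u n m -
      ∑ x' ∈ Finset.Icc 1 M, Hh α i0.1 ^ x' / (Nat.factorial x' : ℝ) *
        Ga α (fun j => u (j + x')) n (m - l * x') i0 := by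
    rw [hpeel]; ring
  rw [hmain, hsum, hre, hre2, range_succ_to_Icc]
  simp only [pow_zero, Nat.factorial_zero, Nat.cast_one, Nat.mul_zero, Nat.sub_zero,
    Nat.add_zero, one_mul, mul_one, div_one]
  rw [sub_eq_add_neg, ← Finset.sum_neg_distrib]
  congr 1
  refine Finset.sum_congr rfl fun t ht => ?_
  simp only [hX]
  ring

lemma Gf_eq_sum_Pf (α : ℝ) (u : ℕ → ℝ) {n m : ℕ} (hm : m ≤ n) :
    Gf α u n m = ∑ k ∈ Finset.range (m + 1), u k * Pf α n m k := by
  classical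
  rw [Gf, ← Finset.sum_fiberwise_of_maps_to (g := fun c => ∑ i, c i)
    (t := Finset.range (m + 1)) (fun c hc => by
      rw [Finset.mem_range]
      exact Nat.lt_succ_of_le (sum_le_of_mem_cv ((mem_cv hm).mp hc)))]
  refine Finset.sum_congr rfl fun k hk => ?_
  rw [Pf, Finset.mul_sum]
  refine Finset.sum_congr rfl fun c hc => ?_
  rw [(Finset.mem_filter.mp hc).2]

lemma deriv_coord (α : ℝ) {n m k : ℕ} (hm : m ≤ n) (i : Fin n) (him : i.1 + 1 ≤ m) :
    ∑ c ∈ (cv n m).filter (fun c => ∑ j, c j = k + 1), (c i : ℝ) * Ff α c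
      = Hh α i.1 * Pf α n (m - (i.1 + 1)) k := by
  classical
  have hm' : m - (i.1 + 1) ≤ n := by omega
  rw [Pf, Finset.mul_sum]
  rw [← Finset.sum_filter_of_ne (p := fun c => 1 ≤ c i) (fun c hc hne => by
    by_contra h
    exact hne (by rw [show c i = 0 by omega]; simp))]
  rw [Finset.filter_filter]
  refine Finset.sum_bij' (i := fun c _ => Function.update c i (c i - 1))
    (j := fun c _ => Function.update c i (c i + 1)) ?_ ?_ ?_ ?_ ?_
  · intro c hc
    obtain ⟨h1, h2, h3⟩ := (mem_cvf hm _).mp hc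
    refine (mem_cvf hm' _).mpr ⟨?_, ?_⟩
    · beta_reduce
      rw [wsum_split i, Function.update_self, erase_sum_update i (fun j v => (j.1 + 1) * v)]
      have h4 := wsum_split i c
      have h5 := weighted_le h1 i
      have e1 : (i.1 + 1) * (c i - 1) + (i.1 + 1) * 1 = (i.1 + 1) * c i := by
        rw [← Nat.mul_add]; congr 1; omega
      omega
    · beta_reduce
      rw [csum_split i, Function.update_self, erase_sum_update i (fun _ v => v)]
      have h4 := csum_split i c
      omega
  · intro c hc
    obtain ⟨h1, h2⟩ := (mem_cvf hm' _).mp hc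
    refine (mem_cvf hm _).mpr ⟨?_, ?_, ?_⟩
    · beta_reduce
      rw [wsum_split i, Function.update_self, erase_sum_update i (fun j v => (j.1 + 1) * v)]
      have h4 := wsum_split i c
      have e2 : (i.1 + 1) * (c i + 1) = (i.1 + 1) * c i + (i.1 + 1) * 1 := by
        rw [← Nat.mul_add]
      omega
    · beta_reduce
      rw [csum_split i, Function.update_self, erase_sum_update i (fun _ v => v)]
      have h4 := csum_split i c
      omega
    · beta_reduce
      rw [Function.update_self]; omega
  · intro c hc
    obtain ⟨h1, h2, h3⟩ := (mem_cvf hm _).mp hc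
    beta_reduce
    rw [Function.update_idem, Function.update_self, show c i - 1 + 1 = c i by omega,
      Function.update_eq_self]
  · intro c hc
    beta_reduce
    rw [Function.update_idem, Function.update_self, Nat.add_sub_cancel, Function.update_eq_self]
  · intro c hc
    obtain ⟨h1, h2, h3⟩ := (mem_cvf hm _).mp hc
    beta_reduce
    rw [Ff_split i α c, Ff_split i α (Function.update c i (c i - 1)), Function.update_self,
      erase_prod_update i (fun j v => Hh α j.1 ^ v / (Nat.factorial v : ℝ))]
    obtain ⟨s, hs⟩ : ∃ s, c i = s + 1 := ⟨c i - 1, by omega⟩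
    rw [hs, Nat.add_sub_cancel, Nat.factorial_succ, pow_succ]
    push_cast
    have hfs : (Nat.factorial s : ℝ) ≠ 0 := Nat.cast_ne_zero.mpr (Nat.factorial_ne_zero _)
    field_simp

lemma deriv_coord_zero (α : ℝ) {n m k : ℕ} (i : Fin n) (him : m < i.1 + 1) :
    ∑ c ∈ (cv n m).filter (fun c => ∑ j, c j = k + 1), (c i : ℝ) * Ff α c = 0 := by
  refine Finset.sum_eq_zero fun c hc => ?_
  have h1 := (Finset.mem_filter.mp hc).1
  have h1' := (Finset.mem_filter.mp h1).2
  have h2 := weighted_le h1' i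
  have : c i = 0 := by nlinarith
  rw [this]
  simp

lemma deriv_rec (α : ℝ) {n m : ℕ} (hm : m ≤ n) (k : ℕ) :
    ((k + 1 : ℕ) : ℝ) * Pf α n m (k + 1) =
      ∑ v ∈ Finset.Icc 1 m, Hh α (v - 1) * Pf α n (m - v) k := by
  classical
  have step1 : ((k + 1 : ℕ) : ℝ) * Pf α n m (k + 1) =
      ∑ i : Fin n, ∑ c ∈ (cv n m).filter (fun c => ∑ j, c j = k + 1), (c i : ℝ) * Ff α c := by
    rw [Finset.sum_comm, Pf, Finset.mul_sum]
    refine Finset.sum_congr rfl fun c hc => ?_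
    have h2 := (Finset.mem_filter.mp hc).2
    rw [← Finset.sum_mul, show ∑ i : Fin n, (c i : ℝ) = ((k + 1 : ℕ) : ℝ) by
      rw [← Nat.cast_sum, h2]]
  rw [step1]
  have step2 : ∀ i : Fin n,
      ∑ c ∈ (cv n m).filter (fun c => ∑ j, c j = k + 1), (c i : ℝ) * Ff α c
      = if i.1 + 1 ≤ m then Hh α i.1 * Pf α n (m - (i.1 + 1)) k else 0 := by
    intro i
    by_cases h : i.1 + 1 ≤ m
    · rw [if_pos h, deriv_coord α hm i h]
    · rw [if_neg h, deriv_coord_zero α i (by omega)]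
  simp only [step2]
  rw [← Finset.sum_filter]
  refine Finset.sum_bij' (i := fun (a : Fin n) _ => a.1 + 1)
    (j := fun v hv => (⟨v - 1, by
      simp only [Finset.mem_Icc] at hv
      omega⟩ : Fin n)) ?_ ?_ ?_ ?_ ?_
  · intro a ha
    simp only [Finset.mem_filter, Finset.mem_univ, true_and] at ha
    simp only [Finset.mem_Icc]
    omega
  · intro v hv
    simp only [Finset.mem_Icc] at hv
    simp only [Finset.mem_filter, Finset.mem_univ, true_and]
    omega
  · intro a ha
    exact Fin.ext (by simp)
  · intro v hv
    simp only [Finset.mem_Icc] at hv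
    exact show v - 1 + 1 = v by omega
  · intro a ha
    simp

lemma mem_compositions {m k : ℕ} {f : Fin k → ℕ} :
    f ∈ compositions m k ↔ (∀ i, 0 < f i) ∧ ∑ i, f i = m := by
  constructor
  · intro h; exact (Finset.mem_filter.mp h).2
  · intro h
    refine Finset.mem_filter.mpr ⟨Fintype.mem_piFinset.mpr fun i => ?_, h⟩
    have : f i ≤ m := h.2 ▸ Finset.single_le_sum (f := f) (fun j _ => Nat.zero_le _)
      (Finset.mem_univ i)
    simp only [Finset.mem_range]; omega

lemma comp_rec (h : ℕ → ℝ) (m k : ℕ) :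
    ∑ f ∈ compositions m (k + 1), ∏ j, h (f j) =
      ∑ v ∈ Finset.Icc 1 m, h v * ∑ g ∈ compositions (m - v) k, ∏ j, h (g j) := by
  classical
  simp only [Finset.mul_sum]
  have hsig : ∑ v ∈ Finset.Icc 1 m, ∑ g ∈ compositions (m - v) k, h v * ∏ j, h (g j)
      = ∑ p ∈ (Finset.Icc 1 m).sigma (fun v => compositions (m - v) k),
          h p.1 * ∏ j, h (p.2 j) := by
    rw [Finset.sum_sigma]
  rw [hsig]
  refine Finset.sum_bij' (i := fun (f : Fin (k+1) → ℕ) _ => (⟨f 0, Fin.tail f⟩ :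
      Σ _ : ℕ, (Fin k → ℕ))) (j := fun p _ => Fin.cons p.1 p.2) ?_ ?_ ?_ ?_ ?_
  · intro f hf
    obtain ⟨hpos, hsum⟩ := mem_compositions.mp hf
    have h0 : f 0 ≤ m := hsum ▸ Finset.single_le_sum (f := f) (fun j _ => Nat.zero_le _)
      (Finset.mem_univ 0)
    have hs : f 0 + ∑ j : Fin k, Fin.tail f j = m := by
      show f 0 + ∑ j : Fin k, f j.succ = m
      rw [← Fin.sum_univ_succ f]
      exact hsum
    have hs2 : ∑ j : Fin k, Fin.tail f j = m - f 0 := by omega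
    exact Finset.mem_sigma.mpr ⟨Finset.mem_Icc.mpr ⟨hpos 0, h0⟩, mem_compositions.mpr
      ⟨fun j => hpos j.succ, hs2⟩⟩
  · rintro ⟨v, g⟩ hp
    obtain ⟨hv, hg⟩ := Finset.mem_sigma.mp hp
    rw [Finset.mem_Icc] at hv
    obtain ⟨hpos, hsum⟩ := mem_compositions.mp hg
    dsimp only at hv hpos hsum ⊢
    refine mem_compositions.mpr ⟨fun j => ?_, ?_⟩
    · refine Fin.cases ?_ ?_ j
      · rw [Fin.cons_zero]; omega
      · intro j'; rw [Fin.cons_succ]; exact hpos j'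
    · rw [Fin.sum_univ_succ, Fin.cons_zero]
      simp only [Fin.cons_succ]
      omega
  · intro f hf
    exact Fin.cons_self_tail f
  · rintro ⟨v, g⟩ hp
    refine Sigma.ext ?_ ?_
    · show (Fin.cons v g : Fin (k + 1) → ℕ) 0 = v
      exact Fin.cons_zero (α := fun _ : Fin (k + 1) => ℕ) v g
    · show HEq (Fin.tail (Fin.cons v g : Fin (k + 1) → ℕ)) g
      exact heq_of_eq (Fin.tail_cons (α := fun _ : Fin (k + 1) => ℕ) v g)
  · intro f hf
    rw [Fin.prod_univ_succ]
    rfl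

lemma compositions_zero_zero : compositions 0 0 = {fun i => i.elim0} := by
  ext f
  constructor
  · intro _
    exact Finset.mem_singleton.mpr (funext fun i => i.elim0)
  · intro _
    exact mem_compositions.mpr ⟨fun i => i.elim0, by simp⟩

lemma compositions_pos_zero {m : ℕ} (hm : 1 ≤ m) : compositions m 0 = ∅ := by
  refine Finset.eq_empty_of_forall_notMem fun f hf => ?_
  have := (mem_compositions.mp hf).2
  simp only [Finset.univ_eq_empty, Finset.sum_empty] at this
  omega

lemma Pf_zero_zero (α : ℝ) (n : ℕ) : Pf α n 0 0 = 1 := by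
  have hset : (cv n 0).filter (fun c => ∑ i, c i = 0) = {fun _ => 0} := by
    ext c
    rw [mem_cvf (Nat.zero_le n), Finset.mem_singleton]
    constructor
    · rintro ⟨h1, h2⟩
      funext i
      have := (Finset.sum_eq_zero_iff.mp h2) i (Finset.mem_univ i)
      exact this
    · rintro rfl
      simp
  rw [Pf, hset, Finset.sum_singleton, Ff]
  simp

lemma Pf_pos_zero (α : ℝ) {n m : ℕ} (hm : 1 ≤ m) (hmn : m ≤ n) : Pf α n m 0 = 0 := by
  rw [Pf]
  refine Finset.sum_eq_zero fun c hc => ?_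
  obtain ⟨h1, h2⟩ := (mem_cvf hmn _).mp hc
  exfalso
  have : ∀ i ∈ Finset.univ, c i = 0 := Finset.sum_eq_zero_iff.mp h2
  have : ∑ i, (i.1 + 1) * c i = 0 :=
    Finset.sum_eq_zero fun i hi => by rw [this i hi, Nat.mul_zero]
  omega

lemma comps_eq_Pf (α : ℝ) {n : ℕ} : ∀ (k m : ℕ), m ≤ n →
    (∑ f ∈ compositions m k, ∏ j, risingFac (1 - α) (f j - 1) / (Nat.factorial (f j) : ℝ))
      = (Nat.factorial k : ℝ) * Pf α n m k := by
  intro k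
  induction k with
  | zero =>
    intro m hm
    rcases Nat.eq_zero_or_pos m with h0 | h1
    · subst h0
      rw [compositions_zero_zero, Finset.sum_singleton, Pf_zero_zero]
      simp
    · rw [compositions_pos_zero h1, Finset.sum_empty, Pf_pos_zero α h1 hm, mul_zero]
  | succ k IH =>
    intro m hm
    have hcr := comp_rec (fun v => risingFac (1 - α) (v - 1) / (Nat.factorial v : ℝ)) m k
    beta_reduce at hcr
    rw [hcr]
    have hcong : ∑ v ∈ Finset.Icc 1 m, (risingFac (1 - α) (v - 1) / (Nat.factorial v : ℝ)) *
        ∑ g ∈ compositions (m - v) k, ∏ j, risingFac (1 - α) (g j - 1) / (Nat.factorial (g j) : ℝ)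
        = (Nat.factorial k : ℝ) * ∑ v ∈ Finset.Icc 1 m, Hh α (v - 1) * Pf α n (m - v) k := by
      rw [Finset.mul_sum]
      refine Finset.sum_congr rfl fun v hv => ?_
      rw [Finset.mem_Icc] at hv
      rw [IH (m - v) (by omega), Hh, show v - 1 + 1 = v by omega]
      ring
    rw [hcong, ← deriv_rec α hm k, Nat.factorial_succ]
    push_cast
    ring

lemma genStirling_eq_Pf (α : ℝ) {n m k : ℕ} (hm : m ≤ n) :
    genStirling α m k = (Nat.factorial m : ℝ) * Pf α n m k := by
  rw [genStirling, comps_eq_Pf α k m hm]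
  have hk : (Nat.factorial k : ℝ) ≠ 0 := Nat.cast_ne_zero.mpr (Nat.factorial_ne_zero _)
  field_simp


/-- The law of the number of blocks of size `l` under the Gibbs sampling formula. -/
theorem gibbsSampling_law_of_size_l (α : ℝ) (hα : α < 1) (V : ℕ → ℕ → ℝ)
    (n l x : ℕ) (hl : 1 ≤ l) (hln : l ≤ n) (hx : x ≤ n / l) :
    ∑ c ∈ (countVectors n).filter (fun c => c ⟨l - 1, by omega⟩ = x),
        gibbsSampling α V n c =
      (Nat.factorial n : ℝ) * (risingFac (1 - α) (l - 1)) ^ x /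
          ((Nat.factorial x : ℝ) * (Nat.factorial l : ℝ) ^ x) *
        ∑ r ∈ Finset.range (n / l - x + 1),
          (-1 : ℝ) ^ r * (risingFac (1 - α) (l - 1)) ^ r /
              ((Nat.factorial r : ℝ) * (Nat.factorial l : ℝ) ^ r *
                (Nat.factorial (n - r * l - l * x) : ℝ)) *
            ∑ k ∈ Finset.Icc (r + x) (r + x + (n - r * l - l * x)),
              V n k * genStirling α (n - r * l - l * x) (k - r - x) := by
  classical
  have hn : 1 ≤ n := le_trans hl hln
  set i0 : Fin n := ⟨l - 1, by omega⟩ with hi0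
  have hi1 : i0.1 + 1 = l := by show l - 1 + 1 = l; omega
  have hlx : l * x ≤ n := by
    have h1 := Nat.div_mul_le_self n l
    have h2 : l * x ≤ l * (n / l) := Nat.mul_le_mul_left l hx
    have h3 : l * (n / l) = n / l * l := Nat.mul_comm _ _
    omega
  have hHh : Hh α i0.1 = risingFac (1 - α) (l - 1) / (Nat.factorial l : ℝ) := by
    show risingFac (1 - α) (l - 1) / (Nat.factorial (l - 1 + 1) : ℝ) = _
    rw [show l - 1 + 1 = l by omega]
  have hgs : ∀ c : Fin n → ℕ, gibbsSampling α V n c =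
      (Nat.factorial n : ℝ) * (V n (∑ i, c i) * Ff α c) := by
    intro c
    rw [gibbsSampling, mul_assoc]
    congr 1
    congr 1
    refine Finset.prod_congr rfl fun i _ => ?_
    rw [Hh, div_pow, div_div]
  have hset : (countVectors n).filter (fun c => c ⟨l - 1, by omega⟩ = x)
      = (cv n n).filter (fun c => c i0 = x) := rfl
  have step1 : ∑ c ∈ (countVectors n).filter (fun c => c ⟨l - 1, by omega⟩ = x),
      gibbsSampling α V n c
      = (Nat.factorial n : ℝ) *
        ∑ c ∈ (cv n n).filter (fun c => c i0 = x), V n (∑ i, c i) * Ff α c := by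
    rw [hset, Finset.mul_sum]
    exact Finset.sum_congr rfl fun c _ => hgs c
  have step2 := peelx α (V n) (le_refl n) i0 x (by rw [hi1]; exact hlx)
  rw [hi1] at step2
  have step3 := Ga_eq α i0 (n - l * x) (by omega) (fun j => V n (j + x))
  rw [hi1, Nat.sub_mul_div n l x] at step3
  -- the per-r term equality
  have hterm : ∀ r ∈ Finset.range (n / l - x + 1),
      (-1 : ℝ) ^ r * Hh α i0.1 ^ r / (Nat.factorial r : ℝ) *
        Gf α (fun j => V n (j + r + x)) n (n - l * x - l * r)
      = (-1 : ℝ) ^ r * (risingFac (1 - α) (l - 1)) ^ r /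
          ((Nat.factorial r : ℝ) * (Nat.factorial l : ℝ) ^ r *
            (Nat.factorial (n - r * l - l * x) : ℝ)) *
        ∑ k ∈ Finset.Icc (r + x) (r + x + (n - r * l - l * x)),
          V n k * genStirling α (n - r * l - l * x) (k - r - x) := by
    intro r hr
    rw [Finset.mem_range] at hr
    have hrx : l * (r + x) ≤ n := by
      have h2 : l * (r + x) ≤ l * (n / l) := Nat.mul_le_mul_left l (by omega)
      have h1 := Nat.div_mul_le_self n l
      have h3 : l * (n / l) = n / l * l := Nat.mul_comm _ _
      omega
    have hmr : n - l * x - l * r = n - r * l - l * x := by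
      rw [Nat.mul_comm r l]
      omega
    have hm'n : n - r * l - l * x ≤ n := by omega
    rw [hmr, Gf_eq_sum_Pf α _ hm'n]
    have hbij : ∑ k ∈ Finset.Icc (r + x) (r + x + (n - r * l - l * x)),
        V n k * genStirling α (n - r * l - l * x) (k - r - x)
        = ∑ k' ∈ Finset.range ((n - r * l - l * x) + 1),
          V n (k' + r + x) *
            ((Nat.factorial (n - r * l - l * x) : ℝ) * Pf α n (n - r * l - l * x) k') := by
      refine Finset.sum_bij' (i := fun k _ => k - (r + x)) (j := fun k' _ => k' + (r + x))
        ?_ ?_ ?_ ?_ ?_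
      · intro a ha
        simp only [Finset.mem_Icc] at ha
        simp only [Finset.mem_range]
        omega
      · intro a ha
        simp only [Finset.mem_range] at ha
        simp only [Finset.mem_Icc]
        omega
      · intro a ha
        beta_reduce
        simp only [Finset.mem_Icc] at ha
        omega
      · intro a ha
        beta_reduce
        omega
      · intro a ha
        simp only [Finset.mem_Icc] at ha
        rw [genStirling_eq_Pf α (n := n) hm'n]
        rw [show a - (r + x) + r + x = a by omega, show a - r - x = a - (r + x) by omega]
    rw [hbij, Finset.mul_sum, Finset.mul_sum]
    refine Finset.sum_congr rfl fun k' hk' => ?_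
    beta_reduce
    rw [hHh, div_pow]
    have hf1 : (Nat.factorial r : ℝ) ≠ 0 := Nat.cast_ne_zero.mpr (Nat.factorial_ne_zero _)
    have hf2 : (Nat.factorial l : ℝ) ≠ 0 := Nat.cast_ne_zero.mpr (Nat.factorial_ne_zero _)
    have hf3 : (Nat.factorial (n - r * l - l * x) : ℝ) ≠ 0 :=
      Nat.cast_ne_zero.mpr (Nat.factorial_ne_zero _)
    field_simp
  rw [step1, step2, step3, Finset.sum_congr rfl hterm, hHh, div_pow]
  ring
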